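/- Let O ⊂ ℝ³ be a nonempty bounded open set. Then there exists a constant C > 0, depending only on O, such that for all l, ω ∈ ℝ³ one has |l| + |ω| ≤ C (∫_O |l + ω × y|² dy)^{1/2}. -/

import Mathlib

noncomputable section

open Set MeasureTheory

/-- We identify ℝ³ with `EuclideanSpace ℝ (Fin 3)`. -/
local notation "E3" => EuclideanSpace ℝ (Fin 3)

/-- The cross product on ℝ³. -/
def cross3 (a b : E3) : E3 :=
  WithLp.toLp 2 ![a 1 * b 2 - a 2 * b 1, a 2 * b 0 - a 0 * b 2, a 0 * b 1 - a 1 * b 0]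

lemma e3_norm_sq (x : E3) : ‖x‖^2 = x 0^2 + x 1^2 + x 2^2 := by
  rw [EuclideanSpace.norm_eq, Real.sq_sqrt (by positivity)]
  simp [Fin.sum_univ_three, sq_abs]
lemma cross_norm_le (a b : E3) : ‖cross3 a b‖ ≤ ‖a‖ * ‖b‖ := by
  have hsq : ‖cross3 a b‖^2 ≤ (‖a‖ * ‖b‖)^2 := by
    rw [mul_pow, e3_norm_sq, e3_norm_sq, e3_norm_sq]
    simp only [cross3, PiLp.toLp_apply, Matrix.cons_val_zero, Matrix.cons_val_one, Matrix.head_cons,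
      Matrix.cons_val_two, Matrix.tail_cons]
    nlinarith [sq_nonneg (a 0 * b 0 + a 1 * b 1 + a 2 * b 2)]
  have := Real.sqrt_le_sqrt hsq
  rwa [Real.sqrt_sq (norm_nonneg _), Real.sqrt_sq (by positivity)] at this
lemma gcont (l ω : E3) : Continuous (fun y : E3 => ‖l + cross3 ω y‖^2) := by
  have : (fun y : E3 => ‖l + cross3 ω y‖^2)
      = fun y => (l 0 + (ω 1 * y 2 - ω 2 * y 1))^2
        + (l 1 + (ω 2 * y 0 - ω 0 * y 2))^2
        + (l 2 + (ω 0 * y 1 - ω 1 * y 0))^2 := by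
    funext y; rw [e3_norm_sq]; simp [cross3]
  rw [this]; fun_prop

-- bound
lemma g_bound (l ω y : E3) (M : ℝ) (hy : ‖y‖ ≤ M) :
    ‖l + cross3 ω y‖^2 ≤ (‖l‖ + ‖ω‖ * M)^2 := by
  have h1 : ‖l + cross3 ω y‖ ≤ ‖l‖ + ‖ω‖ * M := by
    refine (norm_add_le _ _).trans (add_le_add le_rfl ?_)
    exact (cross_norm_le ω y).trans (mul_le_mul_of_nonneg_left hy (norm_nonneg ω))
  exact pow_le_pow_left₀ (norm_nonneg _) h1 2

lemma integrableOn_g (O : Set E3) (hO : IsOpen O) (hObdd : Bornology.IsBounded O) (l ω : E3) :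
    IntegrableOn (fun y => ‖l + cross3 ω y‖^2) O := by
  obtain ⟨M, hM⟩ := hObdd.subset_closedBall 0
  have hfin : volume O < ⊤ :=
    lt_of_le_of_lt (measure_mono hM) (measure_closedBall_lt_top)
  apply Integrable.mono' (g := fun _ => (‖l‖ + ‖ω‖ * M)^2)
  · exact integrableOn_const hfin.ne
  · exact (gcont l ω).aestronglyMeasurable
  · filter_upwards [ae_restrict_mem hO.measurableSet] with y hy
    rw [Real.norm_eq_abs, abs_of_nonneg (by positivity)]
    exact g_bound l ω y M (by simpa [Metric.mem_closedBall, dist_zero_right] using hM hy)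

lemma pcont (y : E3) : Continuous (fun p : E3 × E3 => ‖p.1 + cross3 p.2 y‖^2) := by
  have : (fun p : E3 × E3 => ‖p.1 + cross3 p.2 y‖^2)
      = fun p => (p.1 0 + (p.2 1 * y 2 - p.2 2 * y 1))^2
        + (p.1 1 + (p.2 2 * y 0 - p.2 0 * y 2))^2
        + (p.1 2 + (p.2 0 * y 1 - p.2 1 * y 0))^2 := by
    funext p; rw [e3_norm_sq]; simp [cross3]
  rw [this]; fun_prop

lemma F_cont (O : Set E3) (hO : IsOpen O) (hOne : O.Nonempty) (hObdd : Bornology.IsBounded O) :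
    Continuous (fun p : E3 × E3 => ∫ y in O, ‖p.1 + cross3 p.2 y‖^2) := by
  obtain ⟨M, hM⟩ := hObdd.subset_closedBall 0
  have hM0 : 0 ≤ M := by
    obtain ⟨y, hy⟩ := hOne
    have := hM hy
    simp only [Metric.mem_closedBall, dist_zero_right] at this
    exact (norm_nonneg y).trans this
  have hfin : volume O < ⊤ :=
    lt_of_le_of_lt (measure_mono hM) (measure_closedBall_lt_top)
  rw [continuous_iff_continuousAt]
  intro p₀
  apply continuousAt_of_dominated
    (bound := fun _ => ((‖p₀‖ + 1) + (‖p₀‖ + 1) * M)^2)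
  · exact Filter.Eventually.of_forall fun p => ((gcont p.1 p.2).aestronglyMeasurable)
  · filter_upwards [Metric.ball_mem_nhds p₀ one_pos] with p hp
    filter_upwards [ae_restrict_mem hO.measurableSet] with y hy
    have hy' : ‖y‖ ≤ M := by
      simpa [Metric.mem_closedBall, dist_zero_right] using hM hy
    have hpn : ‖p‖ ≤ ‖p₀‖ + 1 := by
      have h := mem_ball_iff_norm.1 hp
      calc ‖p‖ = ‖p₀ + (p - p₀)‖ := by rw [add_sub_cancel]
        _ ≤ ‖p₀‖ + ‖p - p₀‖ := norm_add_le _ _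
        _ ≤ ‖p₀‖ + 1 := by linarith
    have h1 : ‖p.1‖ ≤ ‖p₀‖ + 1 := (norm_fst_le p).trans hpn
    have h2 : ‖p.2‖ ≤ ‖p₀‖ + 1 := (norm_snd_le p).trans hpn
    rw [Real.norm_eq_abs, abs_of_nonneg (by positivity)]
    calc ‖p.1 + cross3 p.2 y‖^2 ≤ (‖p.1‖ + ‖p.2‖ * M)^2 := g_bound _ _ _ M hy'
      _ ≤ ((‖p₀‖ + 1) + (‖p₀‖ + 1) * M)^2 := by
        apply pow_le_pow_left₀ (by positivity)
        have : ‖p.2‖ * M ≤ (‖p₀‖ + 1) * M := mul_le_mul_of_nonneg_right h2 hM0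
        linarith
  · exact integrableOn_const hfin.ne
  · exact Filter.Eventually.of_forall fun y => (pcont y).continuousAt

lemma rigid_zero (l ω : E3) (y₀ : E3) (r : ℝ) (hr : 0 < r)
    (h : ∀ y ∈ Metric.ball y₀ r, l + cross3 ω y = 0) : l = 0 ∧ ω = 0 := by
  set δ := r / 2 with hδdef
  have hδ : 0 < δ := by positivity
  have mem : ∀ i : Fin 3, y₀ + δ • EuclideanSpace.single i (1:ℝ) ∈ Metric.ball y₀ r := by
    intro i
    rw [Metric.mem_ball, dist_eq_norm, add_sub_cancel_left, norm_smul,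
      EuclideanSpace.norm_single]
    simp [abs_of_pos hδ]
    linarith
  have E0 := h y₀ (Metric.mem_ball_self hr)
  have E1 := h _ (mem 0)
  have E2 := h _ (mem 1)
  -- coordinate equations
  have co : ∀ (q : E3), l + cross3 ω q = 0 → ∀ j : Fin 3,
      l j + (cross3 ω q) j = 0 := by
    intro q hq j
    have := congrArg (· j) hq
    simpa [PiLp.add_apply] using this
  have a00 := co _ E0 0; have a01 := co _ E0 1; have a02 := co _ E0 2
  have a11 := co _ E1 1; have a12 := co _ E1 2
  have a22 := co _ E2 2
  simp only [cross3, PiLp.toLp_apply, Matrix.cons_val_zero, Matrix.cons_val_one, Matrix.head_cons,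
    Matrix.cons_val_two, Matrix.tail_cons, PiLp.add_apply, PiLp.smul_apply,
    EuclideanSpace.single_apply, smul_eq_mul] at a00 a01 a02 a11 a12 a22
  norm_num [Fin.ext_iff] at a11 a12 a22
  have hω2 : ω 2 = 0 := by
    have : ω 2 * δ = 0 := by linarith
    rcases mul_eq_zero.1 this with h' | h'
    · exact h'
    · exact absurd h' hδ.ne'
  have hω1 : ω 1 = 0 := by
    have : ω 1 * δ = 0 := by linarith
    rcases mul_eq_zero.1 this with h' | h'
    · exact h'
    · exact absurd h' hδ.ne'
  have hω0 : ω 0 = 0 := by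
    have : ω 0 * δ = 0 := by linarith
    rcases mul_eq_zero.1 this with h' | h'
    · exact h'
    · exact absurd h' hδ.ne'
  have hl0 : l 0 = 0 := by rw [hω1, hω2] at a00; linarith
  have hl1 : l 1 = 0 := by rw [hω0, hω2] at a01; linarith
  have hl2 : l 2 = 0 := by rw [hω0, hω1] at a02; linarith
  constructor
  · have : ‖l‖^2 = 0 := by rw [e3_norm_sq, hl0, hl1, hl2]; ring
    exact norm_eq_zero.1 ((pow_eq_zero_iff two_ne_zero).1 this)
  · have : ‖ω‖^2 = 0 := by rw [e3_norm_sq, hω0, hω1, hω2]; ring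
    exact norm_eq_zero.1 ((pow_eq_zero_iff two_ne_zero).1 this)

lemma F_pos (O : Set E3) (hO : IsOpen O) (hOne : O.Nonempty)
    (hObdd : Bornology.IsBounded O) (p : E3 × E3) (hp : p ≠ 0) :
    0 < ∫ y in O, ‖p.1 + cross3 p.2 y‖^2 := by
  obtain ⟨l, ω⟩ := p
  set g : E3 → ℝ := fun y => ‖l + cross3 ω y‖^2 with hg
  have key : ∃ y₁ ∈ O, 0 < g y₁ := by
    by_contra hcon
    push_neg at hcon
    obtain ⟨y₀, hy₀⟩ := hOne
    obtain ⟨r, hr, hball⟩ := Metric.isOpen_iff.1 hO y₀ hy₀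
    have hzero : ∀ y ∈ Metric.ball y₀ r, l + cross3 ω y = 0 := by
      intro y hy
      have h1 : g y = 0 := le_antisymm (hcon y (hball hy)) (by positivity)
      exact norm_eq_zero.1 ((pow_eq_zero_iff two_ne_zero).1 h1)
    obtain ⟨hl, hω⟩ := rigid_zero l ω y₀ r hr hzero
    exact hp (by simp [hl, hω, Prod.ext_iff])
  obtain ⟨y₁, hy₁O, hy₁⟩ := key
  have gc : Continuous g := gcont l ω
  have hUopen : IsOpen (O ∩ {y | g y₁ / 2 < g y}) := hO.inter (isOpen_lt continuous_const gc)
  have hy₁U : y₁ ∈ O ∩ {y | g y₁ / 2 < g y} := ⟨hy₁O, by simp; linarith⟩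
  obtain ⟨s, hs, hsub⟩ := Metric.isOpen_iff.1 hUopen y₁ hy₁U
  have hInt : IntegrableOn g O := integrableOn_g O hO hObdd l ω
  have hballO : Metric.ball y₁ s ⊆ O := fun x hx => (hsub hx).1
  have step1 : ∫ y in Metric.ball y₁ s, g y ≤ ∫ y in O, g y := by
    apply setIntegral_mono_set hInt
    · exact Filter.Eventually.of_forall fun y => by positivity
    · exact hballO.eventuallyLE
  have hvol : 0 < (volume (Metric.ball y₁ s)).toReal :=
    ENNReal.toReal_pos (Metric.measure_ball_pos volume y₁ hs).ne' measure_ball_lt_top.ne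
  have step2 : (g y₁ / 2) * (volume (Metric.ball y₁ s)).toReal ≤ ∫ y in Metric.ball y₁ s, g y := by
    apply setIntegral_ge_of_const_le_real measurableSet_ball measure_ball_lt_top.ne
    · exact fun x hx => le_of_lt (hsub hx).2
    · exact hInt.mono_set hballO
  have : 0 < (g y₁ / 2) * (volume (Metric.ball y₁ s)).toReal := by positivity
  linarith

lemma norm_sq_smul (c : ℝ) (l ω y : E3) :
    ‖(c • l) + cross3 (c • ω) y‖^2 = c^2 * ‖l + cross3 ω y‖^2 := by
  rw [e3_norm_sq, e3_norm_sq]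
  simp only [cross3, PiLp.toLp_apply, PiLp.add_apply, PiLp.smul_apply, smul_eq_mul,
    Matrix.cons_val_zero, Matrix.cons_val_one, Matrix.head_cons,
    Matrix.cons_val_two, Matrix.tail_cons]
  ring


/-- Let `O ⊂ ℝ³` be a nonempty bounded open set.  Then there exists a
constant `C > 0`, depending only on `O`, such that for all `l, ω ∈ ℝ³` one has
`|l| + |ω| ≤ C (∫_O |l + ω × y|² dy)^{1/2}`. -/
theorem statement15
    (O : Set (EuclideanSpace ℝ (Fin 3))) (hO : IsOpen O) (hOne : O.Nonempty)
    (hObdd : Bornology.IsBounded O) :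
    ∃ C > (0:ℝ), ∀ l ω : E3,
      ‖l‖ + ‖ω‖ ≤ C * Real.sqrt (∫ y in O, ‖l + cross3 ω y‖ ^ 2) := by
  set F : E3 × E3 → ℝ := fun p => ∫ y in O, ‖p.1 + cross3 p.2 y‖^2 with hF
  have hne : (Metric.sphere (0 : E3 × E3) 1).Nonempty :=
    NormedSpace.sphere_nonempty.mpr zero_le_one
  obtain ⟨q, hqS, hmin⟩ := (isCompact_sphere (0 : E3 × E3) 1).exists_isMinOn hne
    (F_cont O hO hOne hObdd).continuousOn
  have hq0 : q ≠ 0 := by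
    intro h
    rw [h] at hqS
    simp at hqS
  have hm : 0 < F q := F_pos O hO hOne hObdd q hq0
  have hsm : 0 < Real.sqrt (F q) := Real.sqrt_pos.2 hm
  refine ⟨2 / Real.sqrt (F q), by positivity, ?_⟩
  intro l ω
  by_cases h : ((l, ω) : E3 × E3) = 0
  · rw [Prod.mk.injEq] at h
    obtain ⟨h1, h2⟩ := h
    subst h1; subst h2
    simp only [Prod.fst_zero, Prod.snd_zero, norm_zero, add_zero]
    positivity
  · set c := ‖((l, ω) : E3 × E3)‖ with hc
    have hcpos : 0 < c := norm_pos_iff.2 h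
    have hsp : c⁻¹ • ((l, ω) : E3 × E3) ∈ Metric.sphere (0 : E3 × E3) 1 := by
      rw [mem_sphere_zero_iff_norm, norm_smul, norm_inv, norm_norm, ← hc,
        inv_mul_cancel₀ hcpos.ne']
    have hFeq : F (c⁻¹ • ((l, ω) : E3 × E3)) = (c⁻¹)^2 * F (l, ω) := by
      have : (fun y => ‖(c⁻¹ • ((l, ω) : E3 × E3)).1
          + cross3 (c⁻¹ • ((l, ω) : E3 × E3)).2 y‖^2)
          = fun y => (c⁻¹)^2 * ‖l + cross3 ω y‖^2 := by
        funext y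
        exact norm_sq_smul c⁻¹ l ω y
      simp only [hF]
      rw [this, integral_const_mul]
    have h1 : F q ≤ (c⁻¹)^2 * F (l, ω) := hFeq ▸ hmin hsp
    have h2 : F q * c^2 ≤ F (l, ω) := by
      have h3 := mul_le_mul_of_nonneg_right h1 (sq_nonneg c)
      have h4 : (c⁻¹)^2 * F (l, ω) * c^2 = F (l, ω) := by
        field_simp
      linarith
    have hsqrt : Real.sqrt (F q) * c ≤ Real.sqrt (F (l, ω)) := by
      have := Real.sqrt_le_sqrt h2
      rwa [Real.sqrt_mul (le_of_lt hm), Real.sqrt_sq hcpos.le] at this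
    have hlc : ‖l‖ ≤ c := norm_fst_le ((l, ω) : E3 × E3)
    have hωc : ‖ω‖ ≤ c := norm_snd_le ((l, ω) : E3 × E3)
    calc ‖l‖ + ‖ω‖ ≤ 2 * c := by linarith
      _ ≤ 2 / Real.sqrt (F q) * Real.sqrt (F (l, ω)) := by
        rw [div_mul_eq_mul_div, le_div_iff₀ hsm]
        nlinarith
      _ = 2 / Real.sqrt (F q) * Real.sqrt (∫ y in O, ‖l + cross3 ω y‖ ^ 2) := rfl
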